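/- With H_ε as defined, for every bounded set D ⊂ ℂ there exists ε₀ > 0 such that D ⊆ ℂ ∖ I_ε for all ε ∈ (0, ε₀), and sup_{W ∈ D} |H_ε(W) − W| → 0 as ε → 0; that is, H_ε converges uniformly to the identity on every bounded subset of ℂ. -/

import Mathlib

open Complex Set Metric Filter Topology


-- imaginary part estimate
lemma im_est (M ε u v ρ : ℝ) (hM : 1 ≤ M) (hε0 : 0 < ε) (hεM : ε * M ≤ 1/4)
    (hu : |u| ≤ M) (hv : |v| ≤ M) (hρ0 : 0 < ρ)
    (hρ2 : ρ^2 = (1/ε - u)^2 + v^2) :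
    |2*(1/ε)*(v/(ρ + 1/ε - u)) - v| ≤ 3*M^2*ε := by
  set a := 1/ε with ha
  have hεa : ε * a = 1 := by rw [ha]; field_simp
  have hM0 : (0:ℝ) < M := by linarith
  have ha4 : 4*M ≤ a := by
    rw [ha, le_div_iff₀ hε0]; linarith
  have hu' : -M ≤ u ∧ u ≤ M := abs_le.mp hu
  have hv' : -M ≤ v ∧ v ≤ M := abs_le.mp hv
  have hau : a - u ≥ 3*M := by linarith [hu'.2]
  have hρge : a - u ≤ ρ := by nlinarith [sq_nonneg v]
  have hden : 0 < ρ + a - u := by linarith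
  have hgap : (ρ - (a - u)) * a ≤ v^2 := by nlinarith
  -- a + u - ρ bounds
  have h1 : a + u - ρ ≤ 2*M := by linarith [hu'.2]
  have hva : v^2 ≤ M^2 := by nlinarith [hv'.1, hv'.2]
  have hv2a : v^2 / a ≤ M := by
    rw [div_le_iff₀ (by linarith)]; nlinarith
  have h2 : -(3*M) ≤ a + u - ρ := by
    have : ρ - (a-u) ≤ v^2/a := by rw [le_div_iff₀ (by linarith)]; linarith
    have := hv2a; linarith [hu'.1]
  have key : 2*a*(v/(ρ + a - u)) - v = v*((a+u)-ρ)/(ρ + a - u) := by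
    field_simp; ring
  rw [key, abs_div, abs_of_pos hden, div_le_iff₀ hden]
  have hnum : |v*((a+u)-ρ)| ≤ 3*M^2 := by
    rw [abs_mul]
    have : |(a+u)-ρ| ≤ 3*M := abs_le.mpr ⟨by linarith, by linarith⟩
    calc |v| * |a+u-ρ| ≤ M * (3*M) := by
          apply mul_le_mul hv this (abs_nonneg _) (le_of_lt hM0)
      _ = 3*M^2 := by ring
  have hrhs : 3*M^2 ≤ 3*M^2*ε*(ρ + a - u) := by
    have : ε * (ρ + a - u) ≥ 1 := by nlinarith
    nlinarith
  linarith

lemma log_lb (x : ℝ) (hx : 0 < x) : 1 - 1/x ≤ Real.log x := by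
  have h := Real.log_le_sub_one_of_pos (show (0:ℝ) < 1/x by positivity)
  rw [Real.log_div one_ne_zero (ne_of_gt hx), Real.log_one] at h
  linarith

set_option maxHeartbeats 1000000 in
lemma re_est (M ε u v ρ : ℝ) (hM : 1 ≤ M) (hε0 : 0 < ε) (hεM : ε * M ≤ 1/4)
    (huv : u^2 + v^2 ≤ M^2) (hρ0 : 0 < ρ)
    (hρ2 : ρ^2 = (1/ε - u)^2 + v^2) :
    |(Real.log ρ - Real.log (1/ε))/Real.log (1-ε) - u| ≤ 11*M^2*ε := by
  have hM0 : (0:ℝ) < M := by linarith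
  have hε14 : ε ≤ 1/4 := by
    have h := mul_le_mul_of_nonneg_left hM hε0.le
    linarith only [h, hεM]
  have hu : |u| ≤ M := by
    rw [abs_le]
    constructor <;>
      nlinarith only [huv, sq_nonneg v, sq_nonneg (u+M), sq_nonneg (u-M), hM0]
  have hu' : -M ≤ u ∧ u ≤ M := abs_le.mp hu
  have hεuM : |ε*u| ≤ ε*M := by
    rw [abs_mul, abs_of_pos hε0]
    exact mul_le_mul_of_nonneg_left hu hε0.le
  have hεu' : -(ε*M) ≤ ε*u ∧ ε*u ≤ ε*M := abs_le.mp hεuM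
  have hεM0 : 0 ≤ ε*M := by positivity
  have hv2 : v^2 ≤ M^2 := by linarith [sq_nonneg u]
  have hev2 : ε^2*v^2 ≤ 1/16 := by
    have h1 := mul_le_mul_of_nonneg_left hv2 (sq_nonneg ε)
    have h2 : (0:ℝ) ≤ (1/4 - ε*M)*(1/4 + ε*M) :=
      mul_nonneg (by linarith) (by linarith)
    linarith only [h1, h2]
  have h34 : (3:ℝ)/4 ≤ 1 - ε*u := by linarith [hεu'.2]
  have h54 : 1 - ε*u ≤ (5:ℝ)/4 := by linarith [hεu'.1]
  obtain ⟨x, hxdef⟩ : ∃ y : ℝ, y = (1 - ε*u)^2 + ε^2*v^2 := ⟨_, rfl⟩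
  have hx_lo : (1:ℝ)/2 ≤ x := by
    rw [hxdef]
    have h1 : (3:ℝ)/4*(3/4) ≤ (1-ε*u)*(1-ε*u) :=
      mul_le_mul h34 h34 (by linarith) (by linarith)
    linarith only [h1, sq_nonneg (ε*v)]
  have hx_up : x ≤ 2 := by
    rw [hxdef]
    have h1 : (1-ε*u)*(1-ε*u) ≤ (5:ℝ)/4*(5/4) :=
      mul_le_mul h54 h54 (by linarith) (by linarith)
    linarith only [h1, hev2]
  have hx0 : 0 < x := by linarith
  have hxρ : x = (ε*ρ)^2 := by
    rw [hxdef]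
    have h2 : (ε*ρ)^2 = ε^2 * ρ^2 := by ring
    rw [h2, hρ2]; field_simp
  obtain ⟨L, hL⟩ : ∃ y : ℝ, y = Real.log x := ⟨_, rfl⟩
  obtain ⟨G, hG⟩ : ∃ y : ℝ, y = Real.log (1-ε) := ⟨_, rfl⟩
  have hlog_eq : Real.log ρ - Real.log (1/ε) = 1/2 * L := by
    rw [hL, hxρ, Real.log_pow]
    rw [Real.log_mul (ne_of_gt hε0) (ne_of_gt hρ0),
        Real.log_div one_ne_zero (ne_of_gt hε0), Real.log_one]
    push_cast; ring
  have h1ε : (0:ℝ) < 1 - ε := by linarith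
  have hG_up : G ≤ -ε := by
    have := Real.log_le_sub_one_of_pos h1ε; rw [hG]; linarith
  have hG_neg : G < 0 := by linarith
  have hGA1 : G + ε ≤ 0 := by linarith
  have hGA2 : -(4/3)*ε^2 ≤ G + ε := by
    have h := log_lb (1-ε) h1ε
    have he : 1 - 1/(1-ε) = -ε/(1-ε) := by field_simp; ring
    rw [he] at h
    have h2 : -(4/3)*ε^2 - ε ≤ -ε/(1-ε) := by
      rw [le_div_iff₀ h1ε]
      have h3 := mul_le_mul_of_nonneg_left hε14 (sq_nonneg ε)
      linarith only [h3]
    rw [hG]; linarith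
  have hL_up : L ≤ x - 1 := by
    rw [hL]; exact Real.log_le_sub_one_of_pos hx0
  have hL_lo : (x-1) - 2*(x-1)^2 ≤ L := by
    have h := log_lb x hx0
    have he : 1 - 1/x = (x-1)/x := by field_simp
    rw [he, ← hL] at h
    have h2 : (x-1) - 2*(x-1)^2 ≤ (x-1)/x := by
      have h3 : (x-1) - (x-1)/x = (x-1)^2/x := by field_simp
      have h4 : (x-1)^2/x ≤ 2*(x-1)^2 := by
        rw [div_le_iff₀ hx0]
        have h5 := mul_nonneg (sq_nonneg (x-1)) (show (0:ℝ) ≤ 2*x-1 by linarith only [hx_lo])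
        linarith only [h5]
      linarith
    exact le_trans h2 h
  have hxm1 : x - 1 + 2*ε*u = ε^2*(u^2+v^2) := by rw [hxdef]; ring
  have hs2 : ε^2*(u^2+v^2) ≤ ε^2*M^2 := by
    have := mul_le_mul_of_nonneg_left huv (sq_nonneg ε)
    linarith
  have hs1 : 0 ≤ ε^2*(u^2+v^2) := by positivity
  have hεM2 : ε^2*M^2 ≤ (1/4)*(ε*M) := by
    have := mul_nonneg (show (0:ℝ) ≤ 1/4 - ε*M by linarith only [hεM]) hεM0
    linarith only [this]
  have hxb_up : x - 1 ≤ (9/4)*(ε*M) := by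
    linarith only [hxm1, hs2, hεM2, hεu'.1]
  have hxb_lo : -(2*(ε*M)) ≤ x - 1 := by
    linarith only [hxm1, hs1, hεu'.2]
  have hxm1abs : (x-1)^2 ≤ 6*ε^2*M^2 := by
    have h1 := mul_nonneg (by linarith : (0:ℝ) ≤ (9/4)*(ε*M) - (x-1))
      (by linarith : (0:ℝ) ≤ (x-1) + (9/4)*(ε*M))
    linarith only [h1, sq_nonneg (ε*M)]
  have hLA1 : L + 2*ε*u ≤ ε^2*M^2 := by linarith only [hL_up, hxm1, hs2]
  have hLA2 : -(13*ε^2*M^2) ≤ L + 2*ε*u := by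
    linarith only [hL_lo, hxm1, hs1, hxm1abs, sq_nonneg (ε*M)]
  -- combine
  rw [hlog_eq, ← hG]
  have hGne : G ≠ 0 := ne_of_lt hG_neg
  have heq : 1/2 * L/G - u = (L - 2*u*G)/(2*G) := by
    field_simp
  rw [heq, abs_div, abs_of_neg (by linarith : 2*G < 0),
      div_le_iff₀ (by linarith : (0:ℝ) < -(2*G))]
  have habs : |u*(G+ε)| ≤ M*((4/3)*ε^2) := by
    rw [abs_mul]
    exact mul_le_mul hu (abs_le.mpr ⟨by linarith, by linarith⟩) (abs_nonneg _) hM0.le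
  have hu2 := abs_le.mp habs
  have hMM : M*((4/3)*ε^2) ≤ (4/3)*ε^2*M^2 := by
    have := mul_nonneg (mul_nonneg (sq_nonneg ε) (show (0:ℝ) ≤ M - 1 by linarith only [hM])) hM0.le
    linarith only [this]
  have hnum_up : L - 2*u*G ≤ 16*ε^2*M^2 := by
    linarith only [hu2.1, hu2.2, hLA1, hLA2, hMM]
  have hnum_lo : -(16*ε^2*M^2) ≤ L - 2*u*G := by
    linarith only [hu2.1, hu2.2, hLA1, hLA2, hMM]
  have hfin : 16*ε^2*M^2 ≤ 11*M^2*ε * -(2*G) := by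
    have h := mul_le_mul_of_nonneg_left (show 2*ε ≤ -(2*G) by linarith)
      (show (0:ℝ) ≤ 11*M^2*ε by positivity)
    linarith only [h, sq_nonneg (ε*M)]
  calc |L - 2*u*G| ≤ 16*ε^2*M^2 := abs_le.mpr ⟨hnum_lo, hnum_up⟩
    _ ≤ 11*M^2*ε * -(2*G) := hfin

set_option maxHeartbeats 1000000 in
lemma key_est (M ε : ℝ) (hM : 1 ≤ M) (hε0 : 0 < ε) (hε : ε * M ≤ 1/4)
    (W : ℂ) (hW : ‖W‖ ≤ M) :
    ∃ ρ t : ℝ, 0 < ρ ∧ 0 < t ∧ t < 2*Real.pi ∧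
      ((((1 / ε : ℝ)) : ℂ) + (ρ:ℂ) * Complex.exp ((t:ℂ) * Complex.I) = W) ∧
      Real.tan ((Real.pi - t)/2) = W.im / (ρ + 1/ε - W.re) ∧
      ρ^2 = (1/ε - W.re)^2 + W.im^2 := by
  have hM0 : (0:ℝ) < M := by linarith
  have ha : (4:ℝ)*M ≤ 1/ε := by
    rw [le_div_iff₀ hε0]; linarith [hε]
  have hre : W.re ≤ M := le_trans (le_trans (le_abs_self _) (Complex.abs_re_le_norm W)) hW
  set a : ℝ := 1/ε with hadef
  set z : ℂ := W - (a:ℂ) with hzdef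
  have hzre : z.re = W.re - a := by simp [hzdef]
  have hzim : z.im = W.im := by simp [hzdef]
  have hzre_neg : z.re < 0 := by rw [hzre]; linarith
  have hz0 : z ≠ 0 := fun h => by rw [h] at hzre_neg; simp at hzre_neg
  set ρ : ℝ := ‖z‖ with hρdef
  have hρ0 : 0 < ρ := by
    rw [hρdef]; exact norm_pos_iff.mpr hz0
  set θ : ℝ := Complex.arg z with hθdef
  have hθ_ne : θ ≠ 0 := by
    intro h
    rw [hθdef, Complex.arg_eq_zero_iff] at h
    linarith [h.1]
  have hθ_mem := Complex.arg_mem_Ioc z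
  have hθ_lo : -Real.pi < θ := hθ_mem.1
  have hθ_hi : θ ≤ Real.pi := hθ_mem.2
  set t : ℝ := if 0 < θ then θ else θ + 2*Real.pi with htdef
  have hπ := Real.pi_pos
  have ht_pos : 0 < t := by
    rw [htdef]; split
    · assumption
    · rename_i h; push_neg at h; linarith
  have ht_lt : t < 2*Real.pi := by
    rw [htdef]; split
    · linarith
    · rename_i h; push_neg at h
      rcases lt_or_eq_of_le h with h' | h'
      · linarith
      · exact absurd h' hθ_ne
  have hexp : Complex.exp ((t:ℂ) * Complex.I) = Complex.exp ((θ:ℂ) * Complex.I) := by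
    rw [htdef]; split
    · rfl
    · push_cast
      rw [add_mul, Complex.exp_add]
      simp [Complex.exp_two_pi_mul_I]
  have hpolar : (ρ:ℂ) * Complex.exp ((t:ℂ) * Complex.I) = z := by
    rw [hexp, hρdef, hθdef]
    exact_mod_cast Complex.norm_mul_exp_arg_mul_I z
  have hrep : ((a:ℝ):ℂ) + (ρ:ℂ) * Complex.exp ((t:ℂ) * Complex.I) = W := by
    rw [hpolar, hzdef]; ring
  -- cos t, sin t
  have hcos : Real.cos t = z.re / ρ := by
    have h1 : ((ρ:ℂ) * Complex.exp ((t:ℂ) * Complex.I)).re = ρ * Real.cos t := by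
      rw [Complex.mul_re]
      simp [Complex.exp_ofReal_mul_I_re, Complex.exp_ofReal_mul_I_im]
    have h2 := congrArg Complex.re hpolar
    rw [h1] at h2
    field_simp
    linarith [h2]
  have hsin : Real.sin t = z.im / ρ := by
    have h1 : ((ρ:ℂ) * Complex.exp ((t:ℂ) * Complex.I)).im = ρ * Real.sin t := by
      rw [Complex.mul_im]
      simp [Complex.exp_ofReal_mul_I_re, Complex.exp_ofReal_mul_I_im]
    have h2 := congrArg Complex.im hpolar
    rw [h1] at h2
    field_simp
    linarith [h2]
  -- tan identity
  have hs2 : 0 < Real.sin (t/2) :=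
    Real.sin_pos_of_pos_of_lt_pi (by linarith) (by linarith)
  have htan : Real.tan ((Real.pi - t)/2) = Real.cos (t/2) / Real.sin (t/2) := by
    have : (Real.pi - t)/2 = Real.pi/2 - t/2 := by ring
    rw [this, Real.tan_eq_sin_div_cos, Real.sin_pi_div_two_sub, Real.cos_pi_div_two_sub]
  have hρ2 : ρ^2 = (1/ε - W.re)^2 + W.im^2 := by
    have h := Complex.sq_norm z
    rw [Complex.normSq_apply, hzre, hzim] at h
    rw [hρdef, h, ← hadef]; ring
  have hρge : a - W.re ≤ ρ := by
    nlinarith [sq_nonneg W.im, hρ2, hρ0]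
  have hden : 0 < ρ + a - W.re := by linarith
  have htan2 : Real.tan ((Real.pi - t)/2) = W.im / (ρ + a - W.re) := by
    rw [htan]
    have hsin_t : Real.sin t = 2 * Real.sin (t/2) * Real.cos (t/2) := by
      have h := Real.sin_two_mul (t/2)
      rw [show 2*(t/2) = t by ring] at h
      linarith [h]
    have hcos_t : Real.cos t = 1 - 2 * Real.sin (t/2)^2 := by
      have h := Real.cos_two_mul' (t/2)
      rw [show 2*(t/2) = t by ring] at h
      linarith [h, Real.sin_sq_add_cos_sq (t/2)]
    -- from hsin, hcos:
    have e1 : 2 * Real.sin (t/2) * Real.cos (t/2) * ρ = W.im := by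
      have := hsin
      rw [hsin_t] at this
      rw [hzim] at this
      field_simp at this
      linarith [this]
    have e2 : 2 * Real.sin (t/2)^2 * ρ = ρ + a - W.re := by
      have := hcos
      rw [hcos_t, hzre] at this
      field_simp at this
      linarith [this]
    rw [div_eq_div_iff (ne_of_gt hs2) (ne_of_gt hden)]
    calc Real.cos (t/2) * (ρ + a - W.re)
        = Real.cos (t/2) * (2 * Real.sin (t/2)^2 * ρ) := by rw [e2]
      _ = (2 * Real.sin (t/2) * Real.cos (t/2) * ρ) * Real.sin (t/2) := by ring
      _ = W.im * Real.sin (t/2) := by rw [e1]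
  exact ⟨ρ, t, hρ0, ht_pos, ht_lt, by exact_mod_cast hrep,
    by rw [htan2, hadef], by exact_mod_cast hρ2⟩

/-- The conjugacies `H_ε` of the fundamental model converge uniformly to the identity on
bounded sets as `ε → 0` (Section 5): with `R_ε = 1 − ε`, `a_ε = 1/ε`, `I_ε = [a_ε, ∞)`,
and `H_ε(a_ε + ρ e^{it}) = (log ρ − log a_ε)/log R_ε + 2 a_ε i·tan((π−t)/2)`, every
bounded `D ⊂ ℂ` is contained in `ℂ ∖ I_ε` for all small `ε`, and
`sup_{W ∈ D} |H_ε(W) − W| → 0` as `ε → 0`. -/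
theorem fundamental_conjugacy_tends_to_identity
    (H : ℝ → ℂ → ℂ)
    (hH : ∀ ε ∈ Ioo (0:ℝ) 1, ∀ ρ t : ℝ, 0 < ρ → 0 < t → t < 2 * Real.pi →
      H ε (((1 / ε : ℝ) : ℂ) + (ρ : ℂ) * Complex.exp ((t : ℂ) * Complex.I)) =
        (((Real.log ρ - Real.log (1 / ε)) / Real.log (1 - ε) : ℝ) : ℂ) +
        ((2 * (1 / ε) * Real.tan ((Real.pi - t) / 2) : ℝ) : ℂ) * Complex.I) :
    ∀ D : Set ℂ, Bornology.IsBounded D →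
      (∃ ε₀ : ℝ, 0 < ε₀ ∧ ε₀ ≤ 1 ∧ ∀ ε : ℝ, 0 < ε → ε < ε₀ →
        D ⊆ {w : ℂ | w.im = 0 ∧ (1 / ε : ℝ) ≤ w.re}ᶜ) ∧
      TendstoUniformlyOn (fun ε W => H ε W) (fun W => W) (𝓝[Ioo (0:ℝ) 1] 0) D := by
  intro D hD
  obtain ⟨r, hrD⟩ := hD.subset_closedBall 0
  set M : ℝ := max r 1 with hMdef
  have hM1 : (1:ℝ) ≤ M := le_max_right r 1
  have hM0 : (0:ℝ) < M := by linarith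
  have hDM : ∀ W ∈ D, ‖W‖ ≤ M := by
    intro W hW
    have := hrD hW
    rw [Metric.mem_closedBall, Complex.dist_eq, sub_zero] at this
    exact le_trans this (le_max_left r 1)
  constructor
  · refine ⟨1/(4*M), by positivity, ?_, ?_⟩
    · rw [div_le_one (by positivity)]; linarith
    · intro ε hε1 hε2 W hWD
      simp only [Set.mem_compl_iff, Set.mem_setOf_eq, not_and]
      intro _
      have hre : W.re ≤ M :=
        le_trans (le_trans (le_abs_self _) (Complex.abs_re_le_norm W)) (hDM W hWD)
      have h4M : 4*M < 1/ε := by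
        rw [lt_div_iff₀ hε1]
        rw [lt_div_iff₀ (by positivity : (0:ℝ) < 4*M)] at hε2
        linarith
      push_neg
      linarith
  · rw [Metric.tendstoUniformlyOn_iff]
    intro δ hδ
    have hr0 : 0 < min (1/(4*M)) (δ/(15*M^2)) :=
      lt_min (by positivity) (by positivity)
    have h1 : ∀ᶠ ε in 𝓝[Ioo (0:ℝ) 1] 0, ε ∈ Ioo (0:ℝ) 1 :=
      eventually_mem_nhdsWithin
    have h2 : ∀ᶠ ε in 𝓝[Ioo (0:ℝ) 1] 0, ε < min (1/(4*M)) (δ/(15*M^2)) :=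
      Filter.eventually_of_mem
        (mem_nhdsWithin_of_mem_nhds (Iio_mem_nhds hr0)) (fun x hx => hx)
    filter_upwards [h1, h2] with ε hεI hεr W hWD
    have hε0 : 0 < ε := hεI.1
    have hεM : ε * M ≤ 1/4 := by
      have hεr1 : ε < 1/(4*M) := lt_of_lt_of_le hεr (min_le_left _ _)
      rw [lt_div_iff₀ (by positivity : (0:ℝ) < 4*M)] at hεr1
      linarith
    have hWM := hDM W hWD
    obtain ⟨ρ, t, hρ0, ht0, ht2, hrep, htan, hρ2⟩ :=
      key_est M ε hM1 hε0 hεM W hWM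
    have hHW := hH ε hεI ρ t hρ0 ht0 ht2
    rw [hrep] at hHW
    have huv : W.re^2 + W.im^2 ≤ M^2 := by
      have h := Complex.sq_norm W
      rw [Complex.normSq_apply] at h
      nlinarith [hWM, norm_nonneg W]
    have hure : |W.re| ≤ M :=
      le_trans (Complex.abs_re_le_norm W) hWM
    have huim : |W.im| ≤ M :=
      le_trans (Complex.abs_im_le_norm W) hWM
    have hre := re_est M ε W.re W.im ρ hM1 hε0 hεM huv hρ0 hρ2
    have him := im_est M ε W.re W.im ρ hM1 hε0 hεM hure huim hρ0 hρ2
    rw [htan] at hHW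
    rw [Complex.dist_eq, hHW]
    set r1 : ℝ := (Real.log ρ - Real.log (1/ε)) / Real.log (1-ε) with hr1
    set s1 : ℝ := 2*(1/ε)*(W.im/(ρ + 1/ε - W.re)) with hs1
    have hdiff : ‖(W - ((r1:ℂ) + (s1:ℂ)*Complex.I))‖ ≤
        |W.re - r1| + |W.im - s1| := by
      have h := Complex.norm_le_abs_re_add_abs_im (W - ((r1:ℂ) + (s1:ℂ)*Complex.I))
      simpa using h
    have hε15 : 15*M^2*ε < δ := by
      have hεr2 : ε < δ/(15*M^2) := lt_of_lt_of_le hεr (min_le_right _ _)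
      rw [lt_div_iff₀ (by positivity : (0:ℝ) < 15*M^2)] at hεr2
      linarith
    have hMε : 0 ≤ M^2*ε := by positivity
    calc ‖(W - ((r1:ℂ) + (s1:ℂ)*Complex.I))‖
        ≤ |W.re - r1| + |W.im - s1| := hdiff
      _ = |r1 - W.re| + |s1 - W.im| := by rw [abs_sub_comm, abs_sub_comm (W.im)]
      _ ≤ 11*M^2*ε + 3*M^2*ε := add_le_add hre him
      _ < δ := by linarith
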